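/- If 0 < δ < 1/k̄, then every root of the characteristic polynomial of the 3×3 real matrix M = [[−1, k1·δ, 0], [0, k̄·δ − (δ+1), 1], [0, 2δ, −2]] is real and strictly negative. (Hence the disease-free equilibrium of the super compact pairwise SIS model is linearly stable below the epidemic threshold δc = k1/(k2 − k1) = 1/k̄.) -/
import Mathlib


/-- If 0 < δ < 1/k̄, then every (complex) root of the characteristic polynomial
of M = [[−1, k1·δ, 0], [0, k̄·δ − (δ+1), 1], [0, 2δ, −2]] is real and strictly negative,
where k̄ = (k2 − k1)/k1 with 0 < k1 < k2 (linear stability of the disease-free equilibrium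
below the epidemic threshold δc = 1/k̄). -/
theorem scpw_dfe_stable_below_threshold (k1 k2 δ : ℝ) (hk1 : 0 < k1) (hk12 : k1 < k2)
    (hδ : 0 < δ) (hδlt : δ < 1 / ((k2 - k1) / k1)) :
    ∀ z : ℂ,
      ((Matrix.of ![![(-1 : ℝ), k1 * δ, 0],
          ![0, ((k2 - k1) / k1) * δ - (δ + 1), 1],
          ![0, 2 * δ, -2]]).map Complex.ofReal).charpoly.IsRoot z →
        z.im = 0 ∧ z.re < 0 := by
  intro z hz
  rw [Matrix.charpoly, Matrix.det_fin_three] at hz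
  simp [Matrix.charmatrix_apply_eq, Matrix.charmatrix_apply_ne, Polynomial.IsRoot,
    Matrix.vecHead, Matrix.vecTail] at hz
  set a : ℝ := (k2 - k1) / k1 * δ - (δ + 1) with ha
  set b : ℝ := 2 - a with hb'
  set c : ℝ := -2 * a - 2 * δ with hc'
  -- basic real inequalities
  have hkb : 0 < (k2 - k1) / k1 := div_pos (by linarith) hk1
  have hkδ : (k2 - k1) / k1 * δ < 1 := by
    rw [lt_div_iff₀ hkb] at hδlt
    nlinarith
  have haneg : a < -δ := by simp [ha]; nlinarith
  have hb : 2 < b := by simp [hb']; nlinarith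
  have hc : 0 < c := by simp [hc']; nlinarith
  have hdisc : 4 * c < b ^ 2 := by
    have : b ^ 2 - 4 * c = (a + 2) ^ 2 + 8 * δ := by rw [hb', hc']; ring
    nlinarith [sq_nonneg (a + 2)]
  have key : (z + 1) * (z ^ 2 + (b : ℂ) * z + (c : ℂ)) = 0 := by
    rw [hb', hc', ha]
    push_cast
    linear_combination hz
  rcases mul_eq_zero.mp key with h1 | h2
  · have : z = -1 := by linear_combination h1
    subst this
    norm_num
  · have him : z.im * (2 * z.re + b) = 0 := by
      have := congrArg Complex.im h2
      simp [Complex.add_im, Complex.mul_im, sq] at this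
      nlinarith [this]
    have hre : z.re ^ 2 - z.im ^ 2 + b * z.re + c = 0 := by
      have := congrArg Complex.re h2
      simp [Complex.add_re, Complex.mul_re, sq] at this
      nlinarith [this]
    rcases mul_eq_zero.mp him with hy | hx
    · refine ⟨hy, ?_⟩
      by_contra hxe
      push_neg at hxe
      nlinarith
    · exfalso
      have hx' : z.re = -b / 2 := by linarith
      rw [hx'] at hre
      nlinarith [sq_nonneg z.im]
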